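/- Let K be a field, n ≥ 2, and a_1,...,a_n ∈ K. Suppose there exists a balanced multiset of tuples of size N with respect to (a_1,...,a_n). Then there exist N×N permutation matrices X_1,...,X_n over K such that det(Σ_{i=1}^n a_i X_i) = 0. -/

import Mathlib

/-- A balanced multiset of tuples with respect to coefficients `a : Fin n → K`:
a nonempty multiset of nonzero solutions of `∑ i, a i * x i = 0` such that the
multiset of `j`-th coordinates is independent of `j`. -/
def IsBalanced {K : Type*} [Field K] {n : ℕ} (a : Fin n → K)
    (S : Multiset (Fin n → K)) : Prop :=
  S ≠ 0 ∧ (∀ v ∈ S, v ≠ 0 ∧ ∑ i, a i * v i = 0) ∧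
    ∀ j k : Fin n, S.map (fun v => v j) = S.map (fun v => v k)

/-- Two tuples whose lists of values are permutations of each other differ by a
permutation of indices. -/
lemma exists_comp_perm_eq {α : Type*} : ∀ {N : ℕ} (f g : Fin N → α),
    List.Perm (List.ofFn f) (List.ofFn g) → ∃ σ : Equiv.Perm (Fin N), ∀ r, f (σ r) = g r := by
  intro N
  induction N with
  | zero => exact fun f g _ => ⟨1, fun r => r.elim0⟩
  | succ N ih =>
    intro f g h
    have hg0 : g 0 ∈ List.ofFn f := h.symm.subset (by simp [List.mem_ofFn])
    rw [List.mem_ofFn] at hg0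
    obtain ⟨k, hk⟩ := hg0
    set τ : Equiv.Perm (Fin (N + 1)) := Equiv.swap 0 k with hτ
    have hperm : List.Perm (List.ofFn (f ∘ τ)) (List.ofFn g) :=
      (Equiv.Perm.ofFn_comp_perm τ f).trans h
    have h0 : (f ∘ τ) 0 = g 0 := by simp [hτ, hk]
    rw [List.ofFn_succ, List.ofFn_succ, h0] at hperm
    have htail : List.Perm (List.ofFn (fun x : Fin N => (f ∘ τ) x.succ))
        (List.ofFn (fun x : Fin N => g x.succ)) := hperm.cons_inv
    obtain ⟨σ', hσ'⟩ := ih _ _ htail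
    refine ⟨τ * Equiv.Perm.decomposeFin.symm (0, σ'), fun r => ?_⟩
    refine Fin.cases ?_ (fun x => ?_) r
    · simpa using h0
    · have : (Equiv.Perm.decomposeFin.symm (0, σ')) x.succ = (σ' x).succ := by
        rw [Equiv.Perm.decomposeFin_symm_apply_succ]; simp
      simpa [this] using hσ' x

theorem balanced_to_perm_matrices (K : Type*) [Field K] (n N : ℕ) (hn : 2 ≤ n)
    (a : Fin n → K) (S : Multiset (Fin n → K)) (hS : IsBalanced a S)
    (hcard : Multiset.card S = N) :
    ∃ σ : Fin n → Equiv.Perm (Fin N),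
      Matrix.det
        (∑ i, a i • Matrix.of fun r s : Fin N => if σ i r = s then (1 : K) else 0) = 0 := by
  obtain ⟨hne, hsol, hbal⟩ := hS
  obtain ⟨l, rfl⟩ := Quotient.exists_rep S
  simp only [Multiset.quot_mk_to_coe] at hne hsol hbal hcard
  have hlen : l.length = N := by simpa using hcard
  subst hlen
  have i0 : Fin n := ⟨0, by omega⟩
  set w : Fin l.length → K := fun r => l.get r i0 with hw
  -- for each i, pick σ i with w (σ i r) = l.get r i
  have key : ∀ i : Fin n, ∃ σ : Equiv.Perm (Fin l.length),
      ∀ r, w (σ r) = l.get r i := by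
    intro i
    apply exists_comp_perm_eq
    rw [← Multiset.coe_eq_coe]
    have h1 : ∀ j : Fin n, (List.ofFn (fun r : Fin l.length => l.get r j) : Multiset K)
        = (l : Multiset (Fin n → K)).map (fun v => v j) := by
      intro j
      have : List.ofFn (fun r : Fin l.length => l.get r j)
          = l.map (fun v => v j) := by
        have := List.map_ofFn (f := l.get) (g := fun v => v j)
        rw [List.ofFn_get] at this
        exact this.symm
      rw [this]; rfl
    rw [show (List.ofFn w : Multiset K) = _ from h1 i0, h1 i, hbal i0 i]
  choose σ hσ using key
  refine ⟨σ, ?_⟩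
  rw [← Matrix.exists_mulVec_eq_zero_iff]
  refine ⟨w, ?_, ?_⟩
  · -- w ≠ 0
    intro hw0
    have hl0 : l ≠ [] := by
      intro h; exact hne (by simp [h])
    obtain ⟨v, hvmem⟩ := List.exists_mem_of_ne_nil l hl0
    have hvne := (hsol v (by exact hvmem)).1
    apply hvne
    funext j
    have : v j ∈ (l : Multiset (Fin n → K)).map (fun u => u j) :=
      Multiset.mem_map_of_mem _ hvmem
    rw [hbal j i0] at this
    obtain ⟨u, hu, huv⟩ := Multiset.mem_map.mp this
    obtain ⟨r, hr⟩ := List.get_of_mem hu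
    have : u i0 = w r := by simp only [hw, ← hr]
    rw [← huv, this, hw0]; rfl
  · funext r
    have step : (∑ i, a i • Matrix.of fun r s : Fin l.length => if σ i r = s then (1 : K) else 0).mulVec w r
        = ∑ i, a i * w (σ i r) := by
      simp only [Matrix.mulVec, dotProduct, Matrix.sum_apply, Matrix.smul_apply,
        Matrix.of_apply, smul_eq_mul, Finset.sum_mul]
      rw [Finset.sum_comm]
      refine Finset.sum_congr rfl fun i _ => ?_
      simp [mul_ite, ite_mul, Finset.sum_ite_eq]
    rw [step]
    have hmem : l.get r ∈ (↑l : Multiset (Fin n → K)) :=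
      Multiset.mem_coe.mpr (by simp)
    have := (hsol (l.get r) hmem).2
    simp only [hσ]
    simpa using this
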